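/- arXiv:1401.5656 — 2 statements merged into one kernel-verified Lean document; each statement's English description precedes it below -/
import Mathlib

section
/- Let C be a Cartesian closed category, and let i : A → B, j : A' → B', p : X → Y be morphisms in C. Then j has the left lifting property with respect to the induced map X^B → X^A ×_{Y^A} Y^B if and only if the induced map (A × B') ⊔_{A × A'} (B × A') → B × B' has the left lifting property with respect to p. -/
/-!
STATEMENT 0: Let C be a Cartesian closed category, and let i : A → B, j : A' → B',
p : X → Y be morphisms in C. Then j has the LLP with respect to the induced map
X^B → X^A ×_{Y^A} Y^B if and only if the pushout-product
(A × B') ⊔_{A × A'} (B × A') → B × B' has the LLP with respect to p.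
-/

open CategoryTheory CategoryTheory.Limits MonoidalCategory

namespace Stmt0

variable {C : Type u} [Category.{v} C] [CartesianMonoidalCategory C] [MonoidalClosed C]
  [HasPullbacks C] [HasPushouts C]

/-- The induced map `X^B → X^A ×_{Y^A} Y^B` for `i : A ⟶ B` and `p : X ⟶ Y`. -/
noncomputable def expComparison' {A B X Y : C} (i : A ⟶ B) (p : X ⟶ Y) :
    ((ihom B).obj X) ⟶ pullback ((ihom A).map p) ((MonoidalClosed.pre i).app Y) :=
  pullback.lift ((MonoidalClosed.pre i).app X) ((ihom B).map p) ((MonoidalClosed.pre i).naturality p).symm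

/-- The pushout-product `(A × B') ⊔_{A × A'} (B × A') → B × B'` of
`i : A ⟶ B` and `j : A' ⟶ B'`. -/
noncomputable def pushoutProd {A B A' B' : C} (i : A ⟶ B) (j : A' ⟶ B') :
    pushout (A ◁ j) (i ▷ A') ⟶ B ⊗ B' :=
  pushout.desc (i ▷ B') (B ◁ j) (whisker_exchange i j)

open MonoidalClosed

lemma uncurry_comp_pre_app {A B Z X : C} (i : A ⟶ B) (h : Z ⟶ (ihom B).obj X) :
    uncurry (h ≫ (pre i).app X) = i ▷ Z ≫ uncurry h := by
  rw [uncurry_eq, uncurry_eq, MonoidalCategory.whiskerLeft_comp, Category.assoc,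
    id_tensor_pre_app_comp_ev, whisker_exchange_assoc]

lemma curry_comp_pre_app {A B Z X : C} (i : A ⟶ B) (h : B ⊗ Z ⟶ X) :
    curry h ≫ (pre i).app X = curry (i ▷ Z ≫ h) := by
  apply uncurry_injective
  rw [uncurry_comp_pre_app, uncurry_curry, uncurry_curry]

theorem llp_expComparison_iff_pushoutProd_llp
    {A B A' B' X Y : C} (i : A ⟶ B) (j : A' ⟶ B') (p : X ⟶ Y) :
    HasLiftingProperty j (expComparison' i p) ↔
      HasLiftingProperty (pushoutProd i j) p := by
  have hfst : expComparison' i p ≫ pullback.fst _ _ = (pre i).app X :=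
    pullback.lift_fst _ _ _
  have hsnd : expComparison' i p ≫ pullback.snd _ _ = (ihom B).map p :=
    pullback.lift_snd _ _ _
  have hinl : pushout.inl _ _ ≫ pushoutProd i j = i ▷ B' := pushout.inl_desc _ _ _
  have hinr : pushout.inr _ _ ≫ pushoutProd i j = B ◁ j := pushout.inr_desc _ _ _
  constructor
  · intro H
    constructor
    intro u v sq
    -- square data: u : pushout ⟶ X, v : B ⊗ B' ⟶ Y, u ≫ p = pushoutProd i j ≫ v
    have huv : u ≫ p = pushoutProd i j ≫ v := sq.w
    set f : A' ⟶ (ihom B).obj X := curry (pushout.inr _ _ ≫ u) with hf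
    have hcomp : curry (pushout.inl _ _ ≫ u) ≫ (ihom A).map p =
        curry v ≫ (pre i).app Y := by
      rw [← curry_natural_right, curry_comp_pre_app, Category.assoc, huv,
        ← Category.assoc, hinl]
    set g : B' ⟶ pullback ((ihom A).map p) ((pre i).app Y) :=
      pullback.lift (curry (pushout.inl _ _ ≫ u)) (curry v) hcomp with hg
    have sq' : CommSq f j (expComparison' i p) g := by
      constructor
      apply pullback.hom_ext
      · rw [Category.assoc, Category.assoc, hfst, hg, pullback.lift_fst, hf,
          curry_comp_pre_app, ← curry_natural_left, ← Category.assoc,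
          ← pushout.condition, Category.assoc]
      · rw [Category.assoc, Category.assoc, hsnd, hg, pullback.lift_snd, hf,
          ← curry_natural_right, ← curry_natural_left, Category.assoc, huv,
          ← Category.assoc, hinr]
    obtain ⟨⟨L, hL1, hL2⟩⟩ := (H.sq_hasLift sq').exists_lift
    exact ⟨⟨⟨uncurry L, by
      apply pushout.hom_ext
      · rw [← Category.assoc, hinl, ← uncurry_comp_pre_app, ← hfst,
          ← Category.assoc, hL2, hg]
        rw [pullback.lift_fst, uncurry_curry]
      · rw [← Category.assoc, hinr, ← uncurry_natural_left, hL1, hf,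
          uncurry_curry], by
      rw [← uncurry_natural_right, ← hsnd, ← Category.assoc, hL2, hg,
        pullback.lift_snd, uncurry_curry]⟩⟩⟩
  · intro H
    constructor
    intro f g sq
    have hfg : f ≫ expComparison' i p = j ≫ g := sq.w
    have hfg1 : f ≫ (pre i).app X = j ≫ g ≫ pullback.fst _ _ := by
      rw [← hfst, ← Category.assoc, hfg, Category.assoc]
    have hfg2 : f ≫ (ihom B).map p = j ≫ g ≫ pullback.snd _ _ := by
      rw [← hsnd, ← Category.assoc, hfg, Category.assoc]
    set u : pushout (A ◁ j) (i ▷ A') ⟶ X :=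
      pushout.desc (uncurry (g ≫ pullback.fst _ _)) (uncurry f) (by
        rw [← uncurry_natural_left, ← hfg1, uncurry_comp_pre_app]
        ) with hu
    set v : B ⊗ B' ⟶ Y := uncurry (g ≫ pullback.snd _ _) with hv
    have sq' : CommSq u (pushoutProd i j) p v := by
      constructor
      apply pushout.hom_ext
      · rw [← Category.assoc, ← Category.assoc, hinl, hu, pushout.inl_desc,
          hv, ← uncurry_comp_pre_app, ← uncurry_natural_right, Category.assoc,
          Category.assoc, pullback.condition]
      · rw [← Category.assoc, ← Category.assoc, hinr, hu, pushout.inr_desc,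
          hv, ← uncurry_natural_left, ← uncurry_natural_right, hfg2]
    obtain ⟨⟨L, hL1, hL2⟩⟩ := (H.sq_hasLift sq').exists_lift
    refine ⟨⟨⟨curry L, ?_, ?_⟩⟩⟩
    · rw [← curry_natural_left, ← hinr, Category.assoc, hL1, hu,
        pushout.inr_desc, curry_uncurry]
    · apply pullback.hom_ext
      · rw [Category.assoc, hfst, curry_comp_pre_app, ← hinl, Category.assoc,
          hL1, hu, pushout.inl_desc, curry_uncurry]
      · rw [Category.assoc, hsnd, ← curry_natural_right, hL2, hv,
          curry_uncurry]

end Stmt0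
end

section
/- Let f : X → Y be a trivial fibration of simplicial sets. Then the simplicial set of sections Map_Y(Y, X) of f is nonempty and connected. -/
set_option linter.unnecessarySimpa false

open CategoryTheory CategoryTheory.Limits MonoidalCategory Simplicial SSet

namespace KQ

instance homToZeroSubsingleton (a : SimplexCategory) :
    Subsingleton (a ⟶ (⦋0⦌ : SimplexCategory)) :=
  ⟨fun f g => by
    apply SimplexCategory.Hom.ext'
    apply OrderHom.ext
    funext x
    apply Fin.ext
    have h1 : ((f.toOrderHom x : Fin (⦋0⦌.len + 1)) : ℕ) < 0 + 1 := by
      simpa using (f.toOrderHom x).isLt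
    have h2 : ((g.toOrderHom x : Fin (⦋0⦌.len + 1)) : ℕ) < 0 + 1 := by
      simpa using (g.toOrderHom x).isLt
    omega⟩

instance (m : SimplexCategoryᵒᵖ) : Subsingleton ((Δ[0] : SSet).obj m) :=
  (SSet.stdSimplex.objEquiv).subsingleton

/-- `Δ[0]` is a terminal simplicial set. -/
noncomputable def ptIsTerminal : IsTerminal (Δ[0] : SSet) :=
  IsTerminal.ofUniqueHom
    (fun X =>
      { app := fun m => TypeCat.ofHom fun _ => (SSet.stdSimplex.objEquiv).symm
          (SimplexCategory.const m.unop ⦋0⦌ 0)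
        naturality := fun _ _ _ => ConcreteCategory.hom_ext _ _ fun _ => Subsingleton.elim _ _ })
    (fun X m => by
      apply SSet.hom_ext
      intro n
      apply ConcreteCategory.hom_ext
      intro x
      apply Subsingleton.elim)

/-- A map of simplicial sets is a Kan fibration if it has the right lifting
property with respect to all horn inclusions `Λ[n, i] ⟶ Δ[n]`, `n ≥ 1`. -/
def KanFib {X Y : SSet} (f : X ⟶ Y) : Prop :=
  ∀ (n : ℕ) (i : Fin (n + 2)), HasLiftingProperty (horn (n + 1) i).ι f

/-- A map of simplicial sets is a trivial fibration if it has the right lifting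
property with respect to all boundary inclusions `∂Δ[n] ⟶ Δ[n]`. -/
def TrivFib {X Y : SSet} (f : X ⟶ Y) : Prop :=
  ∀ (n : ℕ), HasLiftingProperty (boundary n).ι f

/-- Anodyne maps: left lifting property with respect to all Kan fibrations.
These are exactly the trivial cofibrations of the Kan–Quillen model structure. -/
def Anodyne {A B : SSet} (i : A ⟶ B) : Prop :=
  ∀ ⦃X Y : SSet⦄ (p : X ⟶ Y), KanFib p → HasLiftingProperty i p

/-- Weak homotopy equivalences of simplicial sets, characterized as the maps
that factor as an anodyne map (trivial cofibration) followed by a trivial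
fibration. -/
def WeakEquiv {X Y : SSet} (f : X ⟶ Y) : Prop :=
  ∃ (Z : SSet) (i : X ⟶ Z) (p : Z ⟶ Y), Anodyne i ∧ TrivFib p ∧ i ≫ p = f

/-- The two endpoint inclusions `Δ[0] ⟶ Δ[1]`. -/
noncomputable def vtx (i : Fin 2) : (Δ[0] : SSet) ⟶ Δ[1] :=
  SSet.stdSimplex.map (SimplexCategory.δ i.rev)

/-- Endpoint inclusions of the cylinder `X ⟶ X ⊗ Δ[1]`. -/
noncomputable def cylIncl (i : Fin 2) (X : SSet) : X ⟶ X ⊗ Δ[1] :=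
  CartesianMonoidalCategory.lift (𝟙 X) (ptIsTerminal.from X ≫ vtx i)


lemma surj_to_zero {a : SimplexCategory} (θ : a ⟶ (⦋0⦌ : SimplexCategory)) :
    Function.Surjective θ.toOrderHom := by
  intro k
  refine ⟨0, ?_⟩
  apply Fin.ext
  have h1 : ((θ.toOrderHom 0 : Fin (⦋0⦌.len + 1)) : ℕ) < ⦋0⦌.len + 1 := Fin.isLt _
  have h2 : ((k : Fin (⦋0⦌.len + 1)) : ℕ) < ⦋0⦌.len + 1 := Fin.isLt _
  simp only [SimplexCategory.len_mk] at h1 h2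
  omega

lemma exists_section_through {a : SimplexCategory} {n : ℕ}
    (α : a ⟶ (⦋n⦌ : SimplexCategory))
    (hα : Function.Surjective α.toOrderHom) (i : Fin (a.len + 1)) :
    ∃ δ : (⦋n⦌ : SimplexCategory) ⟶ a,
      δ ≫ α = 𝟙 (⦋n⦌ : SimplexCategory) ∧ δ.toOrderHom (α.toOrderHom i) = i := by
  classical
  let g : Fin (⦋n⦌.len + 1) → Fin (a.len + 1) :=
    fun k => if k = α.toOrderHom i then i else (hα k).choose
  have hg : ∀ k, α.toOrderHom (g k) = k := by
    intro k
    by_cases h : k = α.toOrderHom i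
    · have : g k = i := if_pos h
      rw [this, h]
    · have : g k = (hα k).choose := if_neg h
      rw [this]
      exact (hα k).choose_spec
  have hmono : Monotone g := by
    intro k k' hk
    by_contra hc
    push_neg at hc
    have h1 : α.toOrderHom (g k') ≤ α.toOrderHom (g k) :=
      α.toOrderHom.monotone (le_of_lt hc)
    rw [hg, hg] at h1
    have : k = k' := le_antisymm hk h1
    subst this
    exact lt_irrefl _ hc
  refine ⟨SimplexCategory.Hom.mk ⟨g, hmono⟩, ?_, ?_⟩
  · apply SimplexCategory.Hom.ext'
    apply OrderHom.ext
    funext k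
    show α.toOrderHom (g k) = k
    exact hg k
  · show g (α.toOrderHom i) = i
    exact if_pos rfl

lemma const_of_not_surj {a : SimplexCategory} (α : a ⟶ (⦋1⦌ : SimplexCategory))
    (hα : ¬ Function.Surjective α.toOrderHom) (j : Fin (a.len + 1)) :
    α.toOrderHom j = α.toOrderHom 0 := by
  rw [Function.Surjective] at hα
  push_neg at hα
  obtain ⟨k, hk⟩ := hα
  have h2 : ∀ m : Fin (a.len + 1), ((α.toOrderHom m : Fin (⦋1⦌.len + 1)) : ℕ)
      = 1 - (k : ℕ) := by
    intro m
    have h0 := hk m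
    have h1 : ((α.toOrderHom m : Fin (⦋1⦌.len + 1)) : ℕ) < ⦋1⦌.len + 1 := Fin.isLt _
    have h3 : ((k : Fin (⦋1⦌.len + 1)) : ℕ) < ⦋1⦌.len + 1 := Fin.isLt _
    have h4 : ((α.toOrderHom m : Fin (⦋1⦌.len + 1)) : ℕ) ≠ (k : ℕ) :=
      fun h => h0 (Fin.ext h)
    simp only [SimplexCategory.len_mk] at h1 h3 ⊢
    omega
  exact Fin.ext (by rw [h2, h2])



universe u

/-- The "goodness" predicate for partial lifts encoded as graphs. -/
def IsGood {A B X Y : SSet.{u}} (i : A ⟶ B) (f : X ⟶ Y) (u : A ⟶ X) (v : B ⟶ Y)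
    (G : Set ((a : SimplexCategoryᵒᵖ) × (B.obj a × X.obj a))) : Prop :=
  (∀ (a : SimplexCategoryᵒᵖ) (b : B.obj a) (x x' : X.obj a),
      (⟨a, b, x⟩ : (a : SimplexCategoryᵒᵖ) × (B.obj a × X.obj a)) ∈ G →
      (⟨a, b, x'⟩ : (a : SimplexCategoryᵒᵖ) × (B.obj a × X.obj a)) ∈ G → x = x') ∧
  (∀ (a : SimplexCategoryᵒᵖ) (b : B.obj a) (x : X.obj a),
      (⟨a, b, x⟩ : (a : SimplexCategoryᵒᵖ) × (B.obj a × X.obj a)) ∈ G →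
      f.app a x = v.app a b) ∧
  (∀ (a a' : SimplexCategoryᵒᵖ) (g : a ⟶ a') (b : B.obj a) (x : X.obj a),
      (⟨a, b, x⟩ : (a : SimplexCategoryᵒᵖ) × (B.obj a × X.obj a)) ∈ G →
      (⟨a', B.map g b, X.map g x⟩ : (a : SimplexCategoryᵒᵖ) × (B.obj a × X.obj a)) ∈ G) ∧
  (∀ (a : SimplexCategoryᵒᵖ) (y : A.obj a),
      (⟨a, i.app a y, u.app a y⟩ : (a : SimplexCategoryᵒᵖ) × (B.obj a × X.obj a)) ∈ G)

theorem rlp_mono {A B X Y : SSet.{u}} (i : A ⟶ B)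
    (hi : ∀ a, Function.Injective (i.app a)) (f : X ⟶ Y) (hf : TrivFib f)
    (u : A ⟶ X) (v : B ⟶ Y) (husq : i ≫ v = u ≫ f) :
    ∃ l : B ⟶ X, i ≫ l = u ∧ l ≫ f = v := by
  classical
  -- the base good set : the graph of `u` over `i`
  set T := (a : SimplexCategoryᵒᵖ) × (B.obj a × X.obj a) with hT
  let G₀ : Set T := {p | ∃ y : A.obj p.1, p.2.1 = i.app p.1 y ∧ p.2.2 = u.app p.1 y}
  have hvu : ∀ (a : SimplexCategoryᵒᵖ) (y : A.obj a),
      f.app a (u.app a y) = v.app a (i.app a y) := by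
    intro a y
    have := ConcreteCategory.congr_hom (congrArg (fun (w : A ⟶ Y) => w.app a) husq) y
    exact this.symm
  have hG₀ : IsGood i f u v G₀ := by
    refine ⟨?_, ?_, ?_, ?_⟩
    · rintro a b x x' ⟨y, hy1, hy2⟩ ⟨y', hy1', hy2'⟩
      dsimp only at y y' hy1 hy2 hy1' hy2'
      have : y = y' := hi a (hy1.symm.trans hy1')
      rw [hy2, hy2', this]
    · rintro a b x ⟨y, hy1, hy2⟩
      dsimp only at y hy1 hy2
      rw [hy1, hy2, hvu]
    · rintro a a' g b x ⟨y, hy1, hy2⟩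
      dsimp only at y hy1 hy2
      refine ⟨A.map g y, ?_, ?_⟩ <;> dsimp only
      · rw [hy1]; exact (NatTrans.naturality_apply i g y).symm
      · rw [hy2]; exact (NatTrans.naturality_apply u g y).symm
    · intro a y
      exact ⟨y, rfl, rfl⟩
  -- Zorn
  obtain ⟨M, hG₀M, hMmax⟩ := zorn_subset_nonempty ({G | IsGood i f u v G} : Set (Set T))
    (fun c hc hchain hcne => by
      obtain ⟨G₁, hG₁⟩ := hcne
      refine ⟨⋃₀ c, ?_, fun s hs => Set.subset_sUnion_of_mem hs⟩
      refine ⟨?_, ?_, ?_, ?_⟩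
      · rintro a b x x' hx hx'
        obtain ⟨Gx, hGx, hxGx⟩ := hx
        obtain ⟨Gx', hGx', hxGx'⟩ := hx'
        rcases hchain.total hGx hGx' with h | h
        · exact (hc hGx').1 a b x x' (h hxGx) hxGx'
        · exact (hc hGx).1 a b x x' hxGx (h hxGx')
      · rintro a b x ⟨Gx, hGx, hxGx⟩
        exact (hc hGx).2.1 a b x hxGx
      · rintro a a' g b x ⟨Gx, hGx, hxGx⟩
        exact ⟨Gx, hGx, (hc hGx).2.2.1 a a' g b x hxGx⟩
      · intro a y
        exact ⟨G₁, hG₁, (hc hG₁).2.2.2 a y⟩) G₀ hG₀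
  have hM : IsGood i f u v M := hMmax.1
  -- totality of M
  have htot : ∀ (a : SimplexCategoryᵒᵖ) (b : B.obj a), ∃ x : X.obj a,
      (⟨a, b, x⟩ : T) ∈ M := by
    by_contra hcon
    push_neg at hcon
    obtain ⟨a₀, b₀, hb₀⟩ := hcon
    have hbadex : ∃ n : ℕ, ∃ b : B.obj (Opposite.op ⦋n⦌), ∀ x,
        (⟨Opposite.op ⦋n⦌, b, x⟩ : T) ∉ M := by
      revert b₀ hb₀
      induction a₀ using Opposite.rec with
      | op a' =>
        induction a' using SimplexCategory.rec with
        | mk m => exact fun b hb => ⟨m, b, hb⟩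
    obtain ⟨n, ⟨b, hb⟩, hmin⟩ : ∃ n : ℕ,
        (∃ b : B.obj (Opposite.op ⦋n⦌), ∀ x, (⟨Opposite.op ⦋n⦌, b, x⟩ : T) ∉ M) ∧
        (∀ m, m < n → ∀ b' : B.obj (Opposite.op ⦋m⦌), ∃ x,
          (⟨Opposite.op ⦋m⦌, b', x⟩ : T) ∈ M) := by
      refine ⟨Nat.find hbadex, Nat.find_spec hbadex, fun m hm b' => ?_⟩
      by_contra hc
      push_neg at hc
      exact Nat.find_min hbadex hm ⟨b', hc⟩
    clear hb₀
    have hlow : ∀ (m : SimplexCategoryᵒᵖ), m.unop.len < n → ∀ b' : B.obj m,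
        ∃ x, (⟨m, b', x⟩ : T) ∈ M := by
      intro m
      induction m using Opposite.rec with
      | op a' =>
        induction a' using SimplexCategory.rec with
        | mk k =>
          intro hk b'
          exact hmin k (by simpa [SimplexCategory.len_mk] using hk) b'
    -- boundary data lies in M
    have hbound : ∀ (m : SimplexCategoryᵒᵖ) (α : m.unop ⟶ (⦋n⦌ : SimplexCategory)),
        ¬ Function.Surjective α.toOrderHom →
        ∃ x, (⟨m, B.map α.op b, x⟩ : T) ∈ M := by
      cases n with
      | zero => exact fun m α hα => absurd (surj_to_zero α) hα
      | succ n' =>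
        intro m α hα
        obtain ⟨j, θ', hθ⟩ := SimplexCategory.eq_comp_δ_of_not_surjective α hα
        obtain ⟨x₀, hx₀⟩ := hlow (Opposite.op ⦋n'⦌)
          (by simp [SimplexCategory.len_mk]) (B.map (SimplexCategory.δ j).op b)
        refine ⟨X.map θ'.op x₀, ?_⟩
        have h2 := hM.2.2.1 _ _ θ'.op _ _ hx₀
        have e : B.map α.op b
            = B.map θ'.op (B.map (SimplexCategory.δ j).op b) := by
          rw [← FunctorToTypes.map_comp_apply, ← op_comp, ← hθ]
        rw [e]
        exact h2
    -- no surjective reindexing of `b` can be in M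
    have hnosurj : ∀ (m : SimplexCategoryᵒᵖ) (α : m.unop ⟶ (⦋n⦌ : SimplexCategory))
        (x' : X.obj m), Function.Surjective α.toOrderHom →
        (⟨m, B.map α.op b, x'⟩ : T) ∈ M → False := by
      intro m α x' hs hmem'
      obtain ⟨δ', hδ1, -⟩ := exists_section_through α hs 0
      have h2 := hM.2.2.1 _ _ δ'.op _ _ hmem'
      have e : B.map δ'.op (B.map α.op b) = b := by
        rw [← FunctorToTypes.map_comp_apply, ← op_comp, hδ1]
        simp
      rw [e] at h2
      exact hb _ h2
    -- key uniqueness of surjective reindexings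
    have hkey : ∀ (m : SimplexCategoryᵒᵖ) (α β : m.unop ⟶ (⦋n⦌ : SimplexCategory)),
        Function.Surjective α.toOrderHom → Function.Surjective β.toOrderHom →
        B.map α.op b = B.map β.op b → α = β := by
      intro m α β hsα hsβ he
      apply SimplexCategory.Hom.ext'
      apply OrderHom.ext
      funext i₀
      obtain ⟨δ', hδ1, hδ2⟩ := exists_section_through α hsα i₀
      have hbu : B.map (δ' ≫ β).op b = b := by
        rw [op_comp, FunctorToTypes.map_comp_apply, ← he,
          ← FunctorToTypes.map_comp_apply, ← op_comp, hδ1]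
        simp
      by_cases hinj : Function.Injective (δ' ≫ β).toOrderHom
      · have hmono : Mono (δ' ≫ β) := SimplexCategory.mono_iff_injective.2 hinj
        have hid : δ' ≫ β = 𝟙 _ := SimplexCategory.eq_id_of_mono _
        have h3 : β.toOrderHom (δ'.toOrderHom (α.toOrderHom i₀)) = α.toOrderHom i₀ := by
          have h4 := congrArg
            (fun (w : (⦋n⦌ : SimplexCategory) ⟶ ⦋n⦌) => w.toOrderHom (α.toOrderHom i₀)) hid
          simpa [SimplexCategory.comp_toOrderHom, SimplexCategory.id_toOrderHom]
            using h4
        rw [hδ2] at h3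
        exact h3.symm
      · exfalso
        cases n with
        | zero =>
          apply hinj
          intro p q _
          apply Fin.ext
          have h1 : ((p : Fin (⦋0⦌.len + 1)) : ℕ) < ⦋0⦌.len + 1 := Fin.isLt _
          have h2 : ((q : Fin (⦋0⦌.len + 1)) : ℕ) < ⦋0⦌.len + 1 := Fin.isLt _
          simp only [SimplexCategory.len_mk] at h1 h2
          omega
        | succ n' =>
          obtain ⟨j, θ', hθ⟩ := SimplexCategory.eq_σ_comp_of_not_injective _ hinj
          obtain ⟨x₀, hx₀⟩ := hlow (Opposite.op ⦋n'⦌)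
            (by simp [SimplexCategory.len_mk]) (B.map θ'.op b)
          have h2 := hM.2.2.1 _ _ (SimplexCategory.σ j).op _ _ hx₀
          have e : B.map (SimplexCategory.σ j).op (B.map θ'.op b) = b := by
            rw [← FunctorToTypes.map_comp_apply, ← op_comp, ← hθ, hbu]
          rw [e] at h2
          exact hb _ h2
    -- the boundary-to-X map
    let φ : (∂Δ[n] : SSet) ⟶ X :=
      { app := fun m => TypeCat.ofHom fun s =>
          (hbound m ((stdSimplex.objEquiv (n := ⦋n⦌) (m := m)) s.1) s.2).choose
        naturality := by
          intro m m' g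
          refine ConcreteCategory.hom_ext _ _ fun s => ?_
          simp only [types_comp_apply]
          have h1 := (hbound m'
            ((stdSimplex.objEquiv (n := ⦋n⦌) (m := m')) (((∂Δ[n] : SSet).map g s).1))
            (((∂Δ[n] : SSet).map g s).2)).choose_spec
          have h2 := hM.2.2.1 _ _ g _ _
            (hbound m ((stdSimplex.objEquiv (n := ⦋n⦌) (m := m)) s.1) s.2).choose_spec
          have h2' : (⟨m', B.map ((stdSimplex.objEquiv (n := ⦋n⦌) (m := m'))
              (((∂Δ[n] : SSet).map g s).1)).op b,
              X.map g (hbound m ((stdSimplex.objEquiv (n := ⦋n⦌) (m := m)) s.1) s.2).choose⟩ : T)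
              ∈ M := by
            have e : B.map ((stdSimplex.objEquiv (n := ⦋n⦌) (m := m'))
                (((∂Δ[n] : SSet).map g s).1)).op b
                = B.map g (B.map ((stdSimplex.objEquiv (n := ⦋n⦌) (m := m)) s.1).op b) := by
              have e2 : ((stdSimplex.objEquiv (n := ⦋n⦌) (m := m')) (((∂Δ[n] : SSet).map g s).1))
                  = g.unop ≫ (stdSimplex.objEquiv (n := ⦋n⦌) (m := m)) s.1 := by
                show (stdSimplex.objEquiv (n := ⦋n⦌) (m := m')) ((Δ[n] : SSet).map g s.1) = _
                rw [stdSimplex.map_apply, Equiv.apply_symm_apply]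
              rw [e2, op_comp, FunctorToTypes.map_comp_apply]
              rfl
            rw [e]
            exact h2
          exact hM.1 _ _ _ _ h1 h2' }
    -- the simplex-to-Y map
    let ψ : (Δ[n] : SSet) ⟶ Y :=
      { app := fun m => TypeCat.ofHom fun s =>
          Y.map ((stdSimplex.objEquiv (n := ⦋n⦌) (m := m)) s).op (v.app (Opposite.op ⦋n⦌) b)
        naturality := by
          intro m m' g
          refine ConcreteCategory.hom_ext _ _ fun s => ?_
          simp only [types_comp_apply]
          rw [stdSimplex.map_apply, TypeCat.ofHom_apply, Equiv.apply_symm_apply, op_comp,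
            FunctorToTypes.map_comp_apply]
          rfl }
    have hsq : CommSq φ ((boundary n).ι) f ψ := by
      constructor
      apply SSet.hom_ext
      intro m
      refine ConcreteCategory.hom_ext _ _ fun s => ?_
      have hspec := (hbound m ((stdSimplex.objEquiv (n := ⦋n⦌) (m := m)) s.1) s.2).choose_spec
      have h1 := hM.2.1 _ _ _ hspec
      show f.app m (φ.app m s) = ψ.app m s.1
      rw [show φ.app m s = (hbound m ((stdSimplex.objEquiv (n := ⦋n⦌) (m := m)) s.1) s.2).choose
        from rfl, h1]
      exact NatTrans.naturality_apply v ((stdSimplex.objEquiv (n := ⦋n⦌) (m := m)) s.1).op b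
    haveI := hf n
    let L : (Δ[n] : SSet) ⟶ X := hsq.lift
    have hL1 : (boundary n).ι ≫ L = φ := hsq.fac_left
    have hL2 : L ≫ f = ψ := hsq.fac_right
    let ι : (Δ[n] : SSet).obj (Opposite.op ⦋n⦌) :=
      (stdSimplex.objEquiv (n := ⦋n⦌) (m := Opposite.op ⦋n⦌)).symm (𝟙 (⦋n⦌ : SimplexCategory))
    let x : X.obj (Opposite.op ⦋n⦌) := L.app (Opposite.op ⦋n⦌) ι
    have hLA : ∀ (m : SimplexCategoryᵒᵖ) (α : m.unop ⟶ (⦋n⦌ : SimplexCategory)),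
        L.app m ((stdSimplex.objEquiv (n := ⦋n⦌) (m := m)).symm α) = X.map α.op x := by
      intro m α
      have hnat := NatTrans.naturality_apply L α.op ι
      have e : (Δ[n] : SSet).map α.op ι = (stdSimplex.objEquiv (n := ⦋n⦌) (m := m)).symm α := by
        rw [stdSimplex.map_apply]
        congr 1
        show α ≫ (stdSimplex.objEquiv (n := ⦋n⦌) (m := Opposite.op ⦋n⦌))
          ((stdSimplex.objEquiv (n := ⦋n⦌) (m := Opposite.op ⦋n⦌)).symm (𝟙 (⦋n⦌ : SimplexCategory))) = α
        rw [Equiv.apply_symm_apply, Category.comp_id]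
      rw [e] at hnat
      exact hnat
    have hfx : f.app (Opposite.op ⦋n⦌) x = v.app (Opposite.op ⦋n⦌) b := by
      have h1' : f.app (Opposite.op ⦋n⦌) (L.app (Opposite.op ⦋n⦌) ι)
          = ψ.app (Opposite.op ⦋n⦌) ι :=
        ConcreteCategory.congr_hom (NatTrans.congr_app hL2 (Opposite.op ⦋n⦌)) ι
      have h2' : ψ.app (Opposite.op ⦋n⦌) ι = v.app (Opposite.op ⦋n⦌) b := by
        show Y.map (𝟙 (Opposite.op (⦋n⦌ : SimplexCategory))) (v.app (Opposite.op ⦋n⦌) b)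
          = v.app (Opposite.op ⦋n⦌) b
        rw [FunctorToTypes.map_id_apply]
      exact h1'.trans h2'
    have hmemx : ∀ (m : SimplexCategoryᵒᵖ) (α : m.unop ⟶ (⦋n⦌ : SimplexCategory)),
        ¬ Function.Surjective α.toOrderHom →
        (⟨m, B.map α.op b, X.map α.op x⟩ : T) ∈ M := by
      intro m α hα
      let sBd : (∂Δ[n] : SSet).obj m := ⟨(stdSimplex.objEquiv (n := ⦋n⦌) (m := m)).symm α, hα⟩
      have spec : (⟨m, B.map α.op b, φ.app m sBd⟩ : T) ∈ M :=
        (hbound m ((stdSimplex.objEquiv (n := ⦋n⦌) (m := m)) sBd.1) sBd.2).choose_spec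
      have h1' : L.app m ((stdSimplex.objEquiv (n := ⦋n⦌) (m := m)).symm α) = φ.app m sBd :=
        ConcreteCategory.congr_hom (NatTrans.congr_app hL1 m) sBd
      have hval : X.map α.op x = φ.app m sBd := by
        rw [← hLA m α]
        exact h1'
      rw [hval]
      exact spec
    -- the extension of M
    have hval2 : ∀ (m : SimplexCategoryᵒᵖ) (α : m.unop ⟶ (⦋n⦌ : SimplexCategory))
        (x' : X.obj m), (⟨m, B.map α.op b, x'⟩ : T) ∈ M → x' = X.map α.op x := by
      intro m α x' hmem'
      by_cases hs : Function.Surjective α.toOrderHom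
      · exact (hnosurj m α x' hs hmem').elim
      · exact hM.1 _ _ _ _ hmem' (hmemx m α hs)
    let Mnew : Set T := {p | ∃ α : p.1.unop ⟶ (⦋n⦌ : SimplexCategory),
      p.2.1 = B.map α.op b ∧ p.2.2 = X.map α.op x}
    have hM'good : IsGood i f u v (M ∪ Mnew) := by
      refine ⟨?_, ?_, ?_, ?_⟩
      · rintro m b₁ x₁ x₂ (h1 | ⟨α, hα1, hα2⟩) (h2 | ⟨β, hβ1, hβ2⟩)
        · exact hM.1 _ _ _ _ h1 h2
        · dsimp only at hβ1 hβ2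
          rw [hβ1] at h1
          rw [hβ2]
          exact hval2 _ _ _ h1
        · dsimp only at hα1 hα2
          rw [hα1] at h2
          rw [hα2]
          exact (hval2 _ _ _ h2).symm
        · dsimp only at hα1 hα2 hβ1 hβ2
          have heq : B.map α.op b = B.map β.op b := hα1.symm.trans hβ1
          by_cases hs : Function.Surjective α.toOrderHom
          · by_cases hs' : Function.Surjective β.toOrderHom
            · rw [hα2, hβ2, hkey m α β hs hs' heq]
            · have hmem' := hmemx m β hs'
              rw [← heq] at hmem'
              exact (hnosurj m α _ hs hmem').elim
          · have hmem' := hmemx m α hs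
            rw [heq] at hmem'
            rw [hα2, hβ2]
            exact hval2 _ _ _ hmem'
      · rintro m b₁ x₁ (h1 | ⟨α, hα1, hα2⟩)
        · exact hM.2.1 _ _ _ h1
        · dsimp only at hα1 hα2
          rw [hα1, hα2]
          rw [NatTrans.naturality_apply f α.op x, hfx]
          exact (NatTrans.naturality_apply v α.op b).symm
      · rintro m m' g b₁ x₁ (h1 | ⟨α, hα1, hα2⟩)
        · exact Or.inl (hM.2.2.1 _ _ g _ _ h1)
        · dsimp only at hα1 hα2
          refine Or.inr ⟨g.unop ≫ α, ?_, ?_⟩ <;> dsimp only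
          · rw [hα1, op_comp, FunctorToTypes.map_comp_apply]
            rfl
          · rw [hα2, op_comp, FunctorToTypes.map_comp_apply]
            rfl
      · intro m y
        exact Or.inl (hM.2.2.2 m y)
    have hMM' := hMmax.eq_of_superset hM'good Set.subset_union_left
    have hxin : (⟨Opposite.op ⦋n⦌, b, x⟩ : T) ∈ M ∪ Mnew := by
      refine Or.inr ⟨𝟙 (⦋n⦌ : SimplexCategory), ?_, ?_⟩ <;> dsimp only
      · rw [op_id, FunctorToTypes.map_id_apply]
      · rw [op_id, FunctorToTypes.map_id_apply]
    rw [hMM'] at hxin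
    exact hb x hxin
  -- build the lift
  let l : B ⟶ X :=
    { app := fun a => TypeCat.ofHom fun b => (htot a b).choose
      naturality := by
        intro a a' g
        refine ConcreteCategory.hom_ext _ _ fun b => ?_
        have h1 : (⟨a', B.map g b, X.map g (htot a b).choose⟩ : T) ∈ M :=
          hM.2.2.1 a a' g b _ (htot a b).choose_spec
        exact (hM.1 a' (B.map g b) _ _ (htot (a') (B.map g b)).choose_spec h1) }
  have hmem : ∀ (a : SimplexCategoryᵒᵖ) (b : B.obj a), (⟨a, b, l.app a b⟩ : T) ∈ M :=
    fun a b => (htot a b).choose_spec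
  refine ⟨l, ?_, ?_⟩
  · apply SSet.hom_ext
    intro a
    refine ConcreteCategory.hom_ext _ _ fun y => ?_
    exact hM.1 a (i.app a y) _ _ (hmem a (i.app a y)) (hM.2.2.2 a y)
  · apply SSet.hom_ext
    intro a
    refine ConcreteCategory.hom_ext _ _ fun b => ?_
    exact hM.2.1 a b _ (hmem a b)



lemma vtx_val (i : Fin 2) {a : SimplexCategoryᵒᵖ} (c : (Δ[0] : SSet).obj a)
    (j : Fin (a.unop.len + 1)) :
    ((stdSimplex.asOrderHom ((vtx i).app a c)) j : ℕ) = (i : ℕ) := by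
  show ((Fin.succAbove i.rev (c.down.toOrderHom j)) : ℕ) = (i : ℕ)
  have hz0 : ((c.down.toOrderHom j : Fin (⦋0⦌.len + 1)) : ℕ) = 0 := by
    have h := (c.down.toOrderHom j).isLt
    simp only [SimplexCategory.len_mk] at h ⊢
    omega
  have hz1 : (c.down.toOrderHom j : Fin (⦋0⦌.len + 1))
      = ⟨0, by simp [SimplexCategory.len_mk]⟩ := Fin.ext (by simpa using hz0)
  rw [hz1]
  fin_cases i <;> decide

lemma vtx_not_surj (i : Fin 2) {a : SimplexCategoryᵒᵖ} (c : (Δ[0] : SSet).obj a) :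
    ¬ Function.Surjective (stdSimplex.asOrderHom ((vtx i).app a c)) := by
  intro H
  obtain ⟨j, hj⟩ := H ⟨1 - (i : ℕ), by omega⟩
  have h1 : (i : ℕ) = 1 - (i : ℕ) := by
    have h0 := congrArg Fin.val hj
    rw [vtx_val] at h0
    exact h0
  have h2 := i.isLt
  omega

theorem exists_section {X Y : SSet.{u}} (f : X ⟶ Y) (hf : TrivFib f) :
    ∃ s : Y ⟶ X, s ≫ f = 𝟙 Y := by
  let E : SSet.{u} := (CategoryTheory.Functor.const SimplexCategoryᵒᵖ).obj PEmpty
  let i : E ⟶ Y :=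
    { app := fun a => TypeCat.ofHom fun x => x.elim
      naturality := fun _ _ _ => ConcreteCategory.hom_ext _ _ fun x => x.elim }
  let uu : E ⟶ X :=
    { app := fun a => TypeCat.ofHom fun x => x.elim
      naturality := fun _ _ _ => ConcreteCategory.hom_ext _ _ fun x => x.elim }
  obtain ⟨l, -, h2⟩ := rlp_mono i (fun a p q h => p.elim) f hf uu (𝟙 Y)
    (by apply SSet.hom_ext; intro a; exact ConcreteCategory.hom_ext _ _ fun x => x.elim)
  exact ⟨l, h2⟩

theorem htpy {X Y : SSet.{u}} (f : X ⟶ Y) (hf : TrivFib f) (s t : Y ⟶ X)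
    (hs : s ≫ f = 𝟙 Y) (ht : t ≫ f = 𝟙 Y) :
    ∃ h : Y ⊗ Δ[1] ⟶ X,
      h ≫ f = CartesianMonoidalCategory.fst Y Δ[1] ∧
      cylIncl 0 Y ≫ h = s ∧ cylIncl 1 Y ≫ h = t := by
  classical
  let i2 : Y ⊗ (∂Δ[1] : SSet) ⟶ Y ⊗ (Δ[1] : SSet) := Y ◁ (boundary 1).ι
  have hinj : ∀ a, Function.Injective (i2.app a) := by
    intro a p q h
    have h1 := congrArg Prod.fst h
    have h2 := congrArg Prod.snd h
    exact Prod.ext h1 (Subtype.ext (show p.2.1 = q.2.1 from h2))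
  let u2 : Y ⊗ (∂Δ[1] : SSet) ⟶ X :=
    { app := fun a => TypeCat.ofHom fun p => if ((stdSimplex.asOrderHom (p.2.1 : (Δ[1] : SSet).obj a)) 0 : ℕ) = 0
        then s.app a p.1 else t.app a p.1
      naturality := by
        intro a a' g
        refine ConcreteCategory.hom_ext _ _ fun p => ?_
        show (if ((stdSimplex.asOrderHom ((((∂Δ[1] : SSet)).map g p.2).1 : (Δ[1] : SSet).obj a')) 0 : ℕ) = 0
            then s.app a' (Y.map g p.1) else t.app a' (Y.map g p.1))
          = X.map g (if ((stdSimplex.asOrderHom (p.2.1 : (Δ[1] : SSet).obj a)) 0 : ℕ) = 0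
            then s.app a p.1 else t.app a p.1)
        have hc : ((stdSimplex.asOrderHom ((((∂Δ[1] : SSet)).map g p.2).1 : (Δ[1] : SSet).obj a')) 0 : ℕ)
            = ((stdSimplex.asOrderHom (p.2.1 : (Δ[1] : SSet).obj a)) 0 : ℕ) :=
          congrArg Fin.val (const_of_not_surj (p.2.1).down p.2.2 _)
        rw [hc]
        split_ifs with hcond
        · exact NatTrans.naturality_apply s g p.1
        · exact NatTrans.naturality_apply t g p.1 }
  have husq : i2 ≫ CartesianMonoidalCategory.fst Y (Δ[1] : SSet) = u2 ≫ f := by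
    apply SSet.hom_ext
    intro a
    refine ConcreteCategory.hom_ext _ _ fun p => ?_
    show p.1 = f.app a (if ((stdSimplex.asOrderHom (p.2.1 : (Δ[1] : SSet).obj a)) 0 : ℕ) = 0
        then s.app a p.1 else t.app a p.1)
    split_ifs with hcond
    · exact (ConcreteCategory.congr_hom (NatTrans.congr_app hs a) p.1).symm
    · exact (ConcreteCategory.congr_hom (NatTrans.congr_app ht a) p.1).symm
  obtain ⟨h, h1, h2⟩ := rlp_mono i2 hinj f hf u2 _ husq
  have hcyl : ∀ (iv : Fin 2), ∀ (w : Y ⟶ X),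
      (∀ (a : SimplexCategoryᵒᵖ) (y : Y.obj a)
        (e : (Δ[1] : SSet).obj a) (hns : ¬ Function.Surjective (stdSimplex.asOrderHom e)),
        ((stdSimplex.asOrderHom e) 0 : ℕ) = (iv : ℕ) →
        u2.app a (⟨y, ⟨e, hns⟩⟩ : (Y ⊗ (∂Δ[1] : SSet)).obj a) = w.app a y) →
      cylIncl iv Y ≫ h = w := by
    intro iv w hw
    apply SSet.hom_ext
    intro a
    refine ConcreteCategory.hom_ext _ _ fun y => ?_
    have hq1 : ((cylIncl iv Y).app a y).1 = y :=
      by have := ConcreteCategory.congr_hom (NatTrans.congr_app (CartesianMonoidalCategory.lift_fst (𝟙 Y)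
        (ptIsTerminal.from Y ≫ vtx iv)) a) y; exact this
    have hq2 : ((cylIncl iv Y).app a y).2
        = (vtx iv).app a ((ptIsTerminal.from Y).app a y) :=
      ConcreteCategory.congr_hom (NatTrans.congr_app (CartesianMonoidalCategory.lift_snd (𝟙 Y)
        (ptIsTerminal.from Y ≫ vtx iv)) a) y
    have hns : ¬ Function.Surjective
        (stdSimplex.asOrderHom ((vtx iv).app a ((ptIsTerminal.from Y).app a y))) :=
      vtx_not_surj iv _
    have hqe : (cylIncl iv Y).app a y
        = i2.app a (⟨y, ⟨(vtx iv).app a ((ptIsTerminal.from Y).app a y), hns⟩⟩ :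
            (Y ⊗ (∂Δ[1] : SSet)).obj a) :=
      Prod.ext hq1 hq2
    show h.app a ((cylIncl iv Y).app a y) = w.app a y
    rw [hqe]
    have h1' := ConcreteCategory.congr_hom (NatTrans.congr_app h1 a)
      (⟨y, ⟨(vtx iv).app a ((ptIsTerminal.from Y).app a y), hns⟩⟩ :
        (Y ⊗ (∂Δ[1] : SSet)).obj a)
    exact h1'.trans (hw a y _ hns (vtx_val iv _ 0))
  refine ⟨h, h2, hcyl 0 s ?_, hcyl 1 t ?_⟩
  · intro a y e hns hv
    show (if ((stdSimplex.asOrderHom e) 0 : ℕ) = 0 then s.app a y else t.app a y) = s.app a y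
    rw [if_pos (by simpa using hv)]
  · intro a y e hns hv
    show (if ((stdSimplex.asOrderHom e) 0 : ℕ) = 0 then s.app a y else t.app a y) = t.app a y
    rw [if_neg (by simp [hv])]


/-!
STATEMENT 3: Let `f : X ⟶ Y` be a trivial fibration of simplicial sets. Then the
space of sections `Map_Y(Y, X)` of `f` is nonempty and connected: there exists a
section, and any two sections are connected by a fiberwise homotopy
`h : Y ⊗ Δ[1] ⟶ X` over `Y` (an edge in the section space, which is a Kan
complex, so this is exactly connectedness of `Map_Y(Y, X)`).
-/

theorem sections_of_trivFib_nonempty_connected {X Y : SSet} (f : X ⟶ Y)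
    (hf : TrivFib f) :
    (∃ s : Y ⟶ X, s ≫ f = 𝟙 Y) ∧
    (∀ s t : Y ⟶ X, s ≫ f = 𝟙 Y → t ≫ f = 𝟙 Y →
      ∃ h : Y ⊗ Δ[1] ⟶ X,
        h ≫ f = CartesianMonoidalCategory.fst Y Δ[1] ∧
        cylIncl 0 Y ≫ h = s ∧ cylIncl 1 Y ≫ h = t) := by
  exact ⟨exists_section f hf, fun s t hs ht => htpy f hf s t hs ht⟩

end KQ
end
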